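/- In the ring of formal power series in x with coefficients in ℤ[q], the identity Σ_{m=0}^{∞} x^m (x;q)_m = Σ_{n=0}^{∞} (−1)^n x^{3n} q^{n(3n−1)/2} (1 + q^n x) holds. -/

import Mathlib

open Finset

/-- The parameter `q`, viewed as a constant of the power series ring `ℤ[q][[x]]`. -/
noncomputable def qc : PowerSeries (Polynomial ℤ) :=
  PowerSeries.C (R := Polynomial ℤ) Polynomial.X

/-- The q-Pochhammer symbol `(x;q)_m = (1-x)(1-qx)⋯(1-q^{m-1}x)` in `ℤ[q][[x]]`. -/
noncomputable def qPoch (m : ℕ) : PowerSeries (Polynomial ℤ) :=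
  ∏ i ∈ Finset.range m, (1 - qc ^ i * PowerSeries.X)

/-- The sum `∑_{m=0}^∞ f m` of a family of power series whose `m`-th member is
divisible by `x^m`: its coefficient at `x^d` is the (finite) sum of the coefficients
at `x^d` of the terms `f 0, …, f d`. -/
noncomputable def seriesSum (f : ℕ → PowerSeries (Polynomial ℤ)) :
    PowerSeries (Polynomial ℤ) :=
  PowerSeries.mk fun d => PowerSeries.coeff (R := Polynomial ℤ) d (∑ m ∈ Finset.range (d + 1), f m)

namespace QPent

open PowerSeries

abbrev R := Polynomial ℤ
noncomputable abbrev XX : PowerSeries R := PowerSeries.X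

/-- shifted Pochhammer `(qx;q)_m` -/
noncomputable def qPochS (m : ℕ) : PowerSeries R :=
  ∏ i ∈ Finset.range m, (1 - qc ^ (i + 1) * XX)

noncomputable def a (m : ℕ) : PowerSeries R := XX ^ m * qPoch m
noncomputable def b (m : ℕ) : PowerSeries R := qc ^ (m + 1) * XX ^ (m + 3) * qPochS m
noncomputable def r (n : ℕ) : PowerSeries R :=
  (-1) ^ n * XX ^ (3 * n) * qc ^ (n * (3 * n - 1) / 2) * (1 + qc ^ n * XX)

noncomputable def dd : ℕ → PowerSeries R
  | 0 => 1 + XX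
  | (n+1) => XX ^ (n+1) * qPochS n * (1 - qc ^ (n+1) * XX ^ 2)

lemma qPoch_succ (n : ℕ) : qPoch (n + 1) = qPochS n * (1 - XX) := by
  rw [qPoch, Finset.prod_range_succ']
  simp [qPochS]

lemma qPochS_succ (n : ℕ) : qPochS (n + 1) = qPochS n * (1 - qc ^ (n + 1) * XX) := by
  rw [qPochS, Finset.prod_range_succ]; rfl

lemma step (n : ℕ) : a n + b n = dd n - dd (n + 1) := by
  cases n with
  | zero => simp only [a, b, dd, qPoch, qPochS]; simp; ring
  | succ n =>
      simp only [a, b, dd, qPoch_succ, qPochS_succ]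
      have h1 : XX ^ (n + 1 + 3) = XX ^ (n + 1) * XX ^ 3 := by ring
      have h2 : XX ^ (n + 2) = XX ^ (n + 1) * XX := by ring
      have h3 : qc ^ (n + 1 + 1) = qc * qc ^ (n + 1) := by ring
      rw [h1, h2, h3]
      generalize qc ^ (n + 1) = A
      generalize qPochS n = P
      ring

lemma key (N : ℕ) :
    (∑ m ∈ Finset.range N, (a m + b m)) = dd 0 - dd N := by
  have := Finset.sum_range_sub' (f := dd) N
  rw [← this]
  exact Finset.sum_congr rfl fun m _ => step m

lemma coeff_dd (d N : ℕ) (h : d < N) : PowerSeries.coeff (R := R) d (dd N) = 0 := by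
  obtain ⟨n, rfl⟩ : ∃ n, N = n + 1 := ⟨N - 1, by omega⟩
  have : dd (n + 1) = XX ^ (n + 1) * (qPochS n * (1 - qc ^ (n+1) * XX ^ 2)) := by
    rw [dd]; ring
  rw [this, PowerSeries.coeff_X_pow_mul', if_neg (by omega)]

lemma seriesSum_add (f g : ℕ → PowerSeries R) :
    seriesSum (fun m => f m + g m) = seriesSum f + seriesSum g := by
  refine PowerSeries.ext fun d => ?_
  simp [seriesSum, Finset.sum_add_distrib]

lemma rescale_seriesSum (f : ℕ → PowerSeries R) :
    PowerSeries.rescale Polynomial.X (seriesSum f)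
      = seriesSum (fun m => PowerSeries.rescale Polynomial.X (f m)) := by
  refine PowerSeries.ext fun d => ?_
  simp [seriesSum, PowerSeries.coeff_rescale, Finset.mul_sum]

lemma C_mul_seriesSum (c : R) (f : ℕ → PowerSeries R) :
    PowerSeries.C (R := R) c * seriesSum f = seriesSum (fun m => PowerSeries.C (R := R) c * f m) := by
  refine PowerSeries.ext fun d => ?_
  simp [seriesSum, PowerSeries.coeff_C_mul, Finset.mul_sum]

lemma X_pow_mul_seriesSum (k : ℕ) (f : ℕ → PowerSeries R)
    (hf : ∀ m d, d < m → PowerSeries.coeff (R := R) d (f m) = 0) :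
    XX ^ k * seriesSum f = seriesSum (fun m => XX ^ k * f m) := by
  refine PowerSeries.ext fun d => ?_
  simp only [seriesSum, PowerSeries.coeff_mk, map_sum, PowerSeries.coeff_X_pow_mul']
  by_cases h : k ≤ d
  · rw [if_pos h]
    simp only [if_pos h, PowerSeries.coeff_mk, map_sum]
    refine Finset.sum_subset (Finset.range_subset_range.2 (by omega : d - k + 1 ≤ d + 1)) ?_
    intro m hm hm'
    exact hf m (d - k) (by simp only [Finset.mem_range] at hm hm'; omega)
  · rw [if_neg h]
    simp [if_neg h]

lemma rescale_qc (c : R) : PowerSeries.rescale Polynomial.X (PowerSeries.C (R := R) c)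
    = PowerSeries.C (R := R) c := by
  refine PowerSeries.ext fun n => ?_
  rw [PowerSeries.coeff_rescale, PowerSeries.coeff_C]
  split_ifs with h
  · subst h; simp
  · rw [mul_zero]

lemma rescale_a (m : ℕ) :
    PowerSeries.rescale Polynomial.X (a m) = qc ^ m * XX ^ m * qPochS m := by
  rw [a, map_mul, map_pow, PowerSeries.rescale_X, qPoch, map_prod]
  have : ∀ i, PowerSeries.rescale Polynomial.X (1 - qc ^ i * XX) = 1 - qc ^ (i+1) * XX := by
    intro i
    rw [map_sub, map_one, map_mul, map_pow, PowerSeries.rescale_X]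
    rw [show PowerSeries.rescale Polynomial.X qc = qc from rescale_qc _]
    rw [show (PowerSeries.C (R := R) Polynomial.X : PowerSeries R) = qc from rfl]
    ring
  simp only [this]
  rw [show (PowerSeries.C (R := R) Polynomial.X : PowerSeries R) = qc from rfl, qPochS]
  ring

lemma coeff_a (m d : ℕ) (h : d < m) : PowerSeries.coeff (R := R) d (a m) = 0 := by
  rw [a, PowerSeries.coeff_X_pow_mul', if_neg (by omega)]

lemma coeff_r (n d : ℕ) (h : d < 3 * n) : PowerSeries.coeff (R := R) d (r n) = 0 := by
  have : r n = XX ^ (3*n) * ((-1)^n * qc ^ (n * (3 * n - 1) / 2) * (1 + qc ^ n * XX)) := by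
    rw [r]; ring
  rw [this, PowerSeries.coeff_X_pow_mul', if_neg (by omega)]

lemma cexp (n : ℕ) : (n+1) * (3 * (n+1) - 1) / 2 = n * (3 * n - 1) / 2 + (3 * n + 1) := by
  have h2 : (n+1) * (3 * (n+1) - 1) = n * (3 * n - 1) + 6 * n + 2 := by
    cases n with
    | zero => decide
    | succ m =>
        rw [show 3 * (m + 1 + 1) - 1 = 3 * m + 5 from by omega,
            show 3 * (m + 1) - 1 = 3 * m + 2 from by omega]
        ring
  have he : 2 ∣ n * (3 * n - 1) := by
    rcases Nat.even_or_odd n with ⟨k, hk⟩ | ⟨k, hk⟩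
    · exact Dvd.dvd.mul_right ⟨k, by omega⟩ _
    · refine Dvd.dvd.mul_left ⟨3 * k + 1, by omega⟩ _
  obtain ⟨c, hc⟩ := he
  omega

lemma rescale_r (n : ℕ) :
    qc * XX ^ 3 * PowerSeries.rescale Polynomial.X (r n) = - r (n + 1) := by
  rw [r, map_mul, map_mul, map_mul, map_pow, map_pow, map_pow, map_add, map_one,
    map_mul, map_pow, PowerSeries.rescale_X, map_neg, map_one,
    show PowerSeries.rescale Polynomial.X qc = qc from rescale_qc _,
    show (PowerSeries.C (R := R) Polynomial.X : PowerSeries R) = qc from rfl]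
  rw [show r (n+1) = (-1)^(n+1) * XX ^ (3*(n+1)) * qc ^ ((n+1) * (3*(n+1)-1)/2)
      * (1 + qc ^ (n+1) * XX) from rfl]
  rw [cexp n]
  ring

/-- order hypothesis for rescaled a -/
lemma coeff_rescale_a (m d : ℕ) (h : d < m) :
    PowerSeries.coeff (R := R) d (PowerSeries.rescale Polynomial.X (a m)) = 0 := by
  rw [PowerSeries.coeff_rescale, coeff_a m d h, mul_zero]

lemma coeff_rescale_r (n d : ℕ) (h : d < n) :
    PowerSeries.coeff (R := R) d (PowerSeries.rescale Polynomial.X (r n)) = 0 := by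
  rw [PowerSeries.coeff_rescale, coeff_r n d (by omega), mul_zero]

lemma FE_S : seriesSum a + qc * XX ^ 3 * PowerSeries.rescale Polynomial.X (seriesSum a)
    = 1 + XX := by
  rw [rescale_seriesSum, mul_assoc,
      X_pow_mul_seriesSum 3 _ coeff_rescale_a,
      show (qc : PowerSeries R) = PowerSeries.C (R := R) Polynomial.X from rfl,
      C_mul_seriesSum, ← seriesSum_add]
  have hb : ∀ m, a m + PowerSeries.C (R := R) Polynomial.X
      * (XX ^ 3 * PowerSeries.rescale Polynomial.X (a m)) = a m + b m := by
    intro m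
    rw [rescale_a, b,
        show (PowerSeries.C (R := R) Polynomial.X : PowerSeries R) = qc from rfl]
    generalize qPochS m = P
    ring
  simp only [hb]
  refine PowerSeries.ext fun d => ?_
  rw [seriesSum, PowerSeries.coeff_mk, key, map_sub, coeff_dd d (d+1) (by omega), sub_zero]
  rfl

lemma FE_T : seriesSum r + qc * XX ^ 3 * PowerSeries.rescale Polynomial.X (seriesSum r)
    = 1 + XX := by
  rw [rescale_seriesSum, mul_assoc,
      X_pow_mul_seriesSum 3 _ coeff_rescale_r,
      show (qc : PowerSeries R) = PowerSeries.C (R := R) Polynomial.X from rfl,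
      C_mul_seriesSum, ← seriesSum_add]
  have hb : ∀ n, r n + PowerSeries.C (R := R) Polynomial.X
      * (XX ^ 3 * PowerSeries.rescale Polynomial.X (r n)) = r n - r (n+1) := by
    intro n
    have := rescale_r n
    rw [show (PowerSeries.C (R := R) Polynomial.X : PowerSeries R) = qc from rfl, ← mul_assoc, this]
    ring
  simp only [hb]
  refine PowerSeries.ext fun d => ?_
  rw [seriesSum, PowerSeries.coeff_mk, Finset.sum_range_sub' (f := r), map_sub,
      coeff_r (d+1) d (by omega), sub_zero]
  have : r 0 = 1 + XX := by
    rw [r]; norm_num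
  rw [this]

lemma uniq (A B : PowerSeries R)
    (h : A + qc * XX ^ 3 * PowerSeries.rescale Polynomial.X A
       = B + qc * XX ^ 3 * PowerSeries.rescale Polynomial.X B) : A = B := by
  refine PowerSeries.ext fun d => ?_
  induction d using Nat.strong_induction_on with
  | _ d ih =>
    have hd := congrArg (PowerSeries.coeff (R := R) d) h
    simp only [map_add] at hd
    have e : PowerSeries.coeff (R := R) d (qc * XX ^ 3 * PowerSeries.rescale Polynomial.X A)
        = PowerSeries.coeff (R := R) d (qc * XX ^ 3 * PowerSeries.rescale Polynomial.X B) := by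
      rw [mul_assoc, mul_assoc,
        show (qc : PowerSeries R) = PowerSeries.C (R := R) Polynomial.X from rfl,
        PowerSeries.coeff_C_mul, PowerSeries.coeff_C_mul,
        PowerSeries.coeff_X_pow_mul', PowerSeries.coeff_X_pow_mul']
      by_cases h3 : 3 ≤ d
      · rw [if_pos h3, if_pos h3, PowerSeries.coeff_rescale, PowerSeries.coeff_rescale,
          ih (d - 3) (by omega)]
      · rw [if_neg h3, if_neg h3]
    rw [e] at hd
    exact add_right_cancel hd

end QPent

/-- `∑_{m≥0} x^m (x;q)_m = ∑_{n≥0} (-1)^n x^{3n} q^{n(3n-1)/2} (1 + q^n x)` in `ℤ[q][[x]]`. -/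
theorem qSeries_pentagonal_like :
    seriesSum (fun m => PowerSeries.X ^ m * qPoch m) =
      seriesSum (fun n =>
        (-1) ^ n * PowerSeries.X ^ (3 * n) * qc ^ (n * (3 * n - 1) / 2)
          * (1 + qc ^ n * PowerSeries.X)) := by
  have h1 : (seriesSum fun m => PowerSeries.X ^ m * qPoch m) = seriesSum QPent.a := rfl
  have h2 : (seriesSum fun n =>
      (-1) ^ n * PowerSeries.X ^ (3 * n) * qc ^ (n * (3 * n - 1) / 2)
        * (1 + qc ^ n * PowerSeries.X)) = seriesSum QPent.r := rfl
  rw [h1, h2]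
  exact QPent.uniq _ _ (by rw [QPent.FE_S, QPent.FE_T])
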